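/- Let λ ∈ ℝ and s ∈ ℂ, and let p(s) = τs³ + (1 + cλk_a)s² + cλk_v·s + cλk_p. If p(s) ≠ 0, then the 3×3 complex matrix s·I₃ − (A − cλ·B₁kᵀ) is invertible and the unique entry of the 1×1 matrix C₁·(s·I₃ − A + cλ·B₁kᵀ)⁻¹·B₂ equals 1/p(s). -/

import Mathlib

open Matrix

/-- The transfer function of a single decoupled subsystem: if
`p(s) = τs³ + (1 + cλk_a)s² + cλk_v s + cλk_p ≠ 0`, then `sI₃ - (A - cλ B₁kᵀ)` is
invertible and the unique entry of `C₁ (sI₃ - A + cλ B₁kᵀ)⁻¹ B₂` equals `1/p(s)`. -/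
theorem stmt_5 (τ kp kv ka c lam : ℝ) (hτ : 0 < τ) (s : ℂ)
    (A : Matrix (Fin 3) (Fin 3) ℂ)
    (hA : A = !![0, 1, 0; 0, 0, 1; 0, 0, -(1 / (τ : ℂ))])
    (B1 B2 : Matrix (Fin 3) (Fin 1) ℂ)
    (hB1 : B1 = !![0; 0; 1 / (τ : ℂ)]) (hB2 : B2 = B1)
    (C1 : Matrix (Fin 1) (Fin 3) ℂ) (hC1 : C1 = !![1, 0, 0])
    (kT : Matrix (Fin 1) (Fin 3) ℂ) (hkT : kT = !![(kp : ℂ), (kv : ℂ), (ka : ℂ)])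
    (p : ℂ)
    (hp : p = (τ : ℂ) * s ^ 3 + (1 + (c : ℂ) * (lam : ℂ) * (ka : ℂ)) * s ^ 2 +
      (c : ℂ) * (lam : ℂ) * (kv : ℂ) * s + (c : ℂ) * (lam : ℂ) * (kp : ℂ))
    (hps : p ≠ 0) :
    IsUnit (s • (1 : Matrix (Fin 3) (Fin 3) ℂ) -
      (A - ((c : ℂ) * (lam : ℂ)) • (B1 * kT))).det ∧
    (C1 * (s • (1 : Matrix (Fin 3) (Fin 3) ℂ) - A +
      ((c : ℂ) * (lam : ℂ)) • (B1 * kT))⁻¹ * B2) 0 0 = 1 / p := by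
  have hτ0 : (τ : ℂ) ≠ 0 := by
    exact_mod_cast hτ.ne'
  set cl : ℂ := (c : ℂ) * (lam : ℂ) with hcl
  have hM : s • (1 : Matrix (Fin 3) (Fin 3) ℂ) - A + cl • (B1 * kT) =
      !![s, -1, 0; 0, s, -1; cl * kp / τ, cl * kv / τ, s + 1 / τ + cl * ka / τ] := by
    subst hA hB1 hkT
    ext i j
    fin_cases i <;> fin_cases j <;>
      simp [Matrix.mul_apply, Fin.sum_univ_three, Matrix.one_apply, Matrix.vecHead, Matrix.vecTail] <;> ring
  have hM' : s • (1 : Matrix (Fin 3) (Fin 3) ℂ) - (A - cl • (B1 * kT)) =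
      s • (1 : Matrix (Fin 3) (Fin 3) ℂ) - A + cl • (B1 * kT) := by
    abel
  have hdet : (s • (1 : Matrix (Fin 3) (Fin 3) ℂ) - A + cl • (B1 * kT)).det = p / τ := by
    rw [hM, Matrix.det_fin_three, hp]
    simp [Matrix.cons_val_zero, Matrix.cons_val_one]
    field_simp
    ring
  have hdet0 : (s • (1 : Matrix (Fin 3) (Fin 3) ℂ) - A + cl • (B1 * kT)).det ≠ 0 := by
    rw [hdet]
    exact div_ne_zero hps hτ0
  refine ⟨by rw [hM']; exact isUnit_iff_ne_zero.mpr hdet0, ?_⟩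
  have hinv : (s • (1 : Matrix (Fin 3) (Fin 3) ℂ) - A + cl • (B1 * kT))⁻¹ =
      (p / τ)⁻¹ • (s • (1 : Matrix (Fin 3) (Fin 3) ℂ) - A + cl • (B1 * kT)).adjugate := by
    rw [Matrix.inv_def, hdet, Ring.inverse_eq_inv]
  have hadj02 : (s • (1 : Matrix (Fin 3) (Fin 3) ℂ) - A + cl • (B1 * kT)).adjugate 0 2 = 1 := by
    rw [hM, Matrix.adjugate_fin_three]
    simp [Matrix.cons_val]
  rw [hC1, hB2, hinv]
  set N := (s • (1 : Matrix (Fin 3) (Fin 3) ℂ) - A + cl • (B1 * kT)).adjugate with hN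
  rw [hB1]
  simp [Matrix.mul_apply, Fin.sum_univ_three, Fin.sum_univ_one, Matrix.smul_apply, Matrix.vecMul, dotProduct, hadj02]
  field_simp
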